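/- Let A* ∈ ℂ^{N×n} be isometric, x0 ∈ ℂ^n with y0 := A*x0 having all components nonzero, ω0 the componentwise phase of y0, B := A·diag(ω0) with A = (A*)^H, and 𝓑 ∈ ℝ^{2n×N} the real form of B. Then the eigenvalues (with multiplicity) of the real symmetric matrix 𝓑𝓑^T ∈ ℝ^{2n×2n} are invariant under the involution μ ↦ 1 − μ; equivalently, the characteristic polynomial p of 𝓑𝓑^T satisfies p(1 − X) = p(X) (composition of p with the polynomial 1 − X). In particular, the squared singular values λ_k² of 𝓑, listed in decreasing order λ_1 ≥ … ≥ λ_{2n}, satisfy λ_k² + λ_{2n+1−k}² = 1 for k = 1, …, n. -/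

import Mathlib

open Matrix Complex Polynomial

noncomputable section

/-- The componentwise phase `z/|z|`. -/
noncomputable def phase (z : ℂ) : ℂ := z / (‖z‖ : ℂ)

/-- `B = A · diag(ω0)` where `A = (A*)ᴴ`. -/
noncomputable def Bmat {N n : ℕ} (Aadj : Matrix (Fin N) (Fin n) ℂ) (ω0 : Fin N → ℂ) :
    Matrix (Fin n) (Fin N) ℂ := fun i j => Aadjᴴ i j * ω0 j

/-- The real form `𝓑 = [Re B; Im B]` of `B`. -/
noncomputable def calB {N n : ℕ} (Aadj : Matrix (Fin N) (Fin n) ℂ) (ω0 : Fin N → ℂ) :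
    Matrix (Fin n ⊕ Fin n) (Fin N) ℝ :=
  Matrix.fromRows ((Bmat Aadj ω0).map Complex.re) ((Bmat Aadj ω0).map Complex.im)

lemma charpoly_comp_one_sub {ι : Type*} [Fintype ι] [DecidableEq ι]
    (M : Matrix ι ι ℝ) (h : Even (Fintype.card ι)) :
    M.charpoly.comp (1 - X) = ((1 : Matrix ι ι ℝ) - M).charpoly := by
  have hmap : (charmatrix M).map ⇑(compRingHom (1 - X)) = -(charmatrix ((1 : Matrix ι ι ℝ) - M)) := by
    ext i j
    by_cases hij : i = j
    · subst hij
      simp only [Matrix.map_apply, charmatrix_apply_eq, coe_compRingHom, Matrix.neg_apply,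
        Matrix.sub_apply, Matrix.one_apply_eq, sub_comp, X_comp, C_comp, _root_.map_sub,
        Polynomial.C_1]
      ring
    · simp only [Matrix.map_apply, charmatrix_apply_ne _ _ _ hij, coe_compRingHom,
        Matrix.neg_apply, Matrix.sub_apply, Matrix.one_apply_ne hij, neg_comp, C_comp,
        _root_.map_sub, zero_sub, map_neg]
      ring
  have h0 : M.charpoly.comp (1 - X) = compRingHom (1 - X) (charmatrix M).det := rfl
  rw [h0, RingHom.map_det, RingHom.mapMatrix_apply, hmap, Matrix.det_neg, Matrix.charpoly,
    h.neg_one_pow, one_mul]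

lemma charpoly_orth_conj {ι : Type*} [Fintype ι] [DecidableEq ι]
    (J M : Matrix ι ι ℝ) (hJ : J * Jᵀ = 1) :
    (J * M * Jᵀ).charpoly = M.charpoly := by
  have hJC : J.map (C : ℝ →+* ℝ[X]) * Jᵀ.map C = 1 := by
    rw [← Matrix.map_mul, hJ]
    simp
  have hdet : (J.map (C : ℝ →+* ℝ[X])).det * (Jᵀ.map C).det = 1 := by
    rw [← Matrix.det_mul, hJC, Matrix.det_one]
  have h1 : charmatrix (J * M * Jᵀ) = J.map C * charmatrix M * Jᵀ.map C := by
    unfold charmatrix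
    rw [RingHom.mapMatrix_apply, RingHom.mapMatrix_apply, Matrix.map_mul, Matrix.map_mul]
    rw [mul_sub, sub_mul]
    congr 1
    rw [← (Matrix.scalar_commute (X : ℝ[X]) (fun r' => Commute.all _ _) (J.map C)).eq, mul_assoc,
      hJC, mul_one]
  rw [Matrix.charpoly, Matrix.charpoly, h1, Matrix.det_mul, Matrix.det_mul]
  calc (J.map (C : ℝ →+* ℝ[X])).det * (charmatrix M).det * (Jᵀ.map C).det
      = (J.map (C : ℝ →+* ℝ[X])).det * (Jᵀ.map C).det * (charmatrix M).det := by ring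
    _ = (charmatrix M).det := by rw [hdet, one_mul]

lemma fromBlocks_sub' {l m n o R : Type*} [AddGroup R]
    (A : Matrix n l R) (B : Matrix n m R) (C : Matrix o l R) (D : Matrix o m R)
    (A' : Matrix n l R) (B' : Matrix n m R) (C' : Matrix o l R) (D' : Matrix o m R) :
    fromBlocks A B C D - fromBlocks A' B' C' D'
      = fromBlocks (A - A') (B - B') (C - C') (D - D') := by
  simp only [sub_eq_add_neg, Matrix.fromBlocks_neg, Matrix.fromBlocks_add]

lemma antitone_rev_eq {m : ℕ} (lam μ : Fin m → ℝ) (hlam : Antitone lam) (hμ : Antitone μ)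
    (h : ∏ k : Fin m, (X - Polynomial.C (lam k)) = ∏ k : Fin m, (X - Polynomial.C (μ k))) :
    lam = μ := by
  have hroots : (Finset.univ.val.map lam) = (Finset.univ.val.map μ) := by
    have h1 := congrArg Polynomial.roots h
    rw [Finset.prod_eq_multiset_prod, Finset.prod_eq_multiset_prod] at h1
    rw [show (Finset.univ.val.map fun k => X - Polynomial.C (lam k))
        = (Finset.univ.val.map lam).map (fun a => X - Polynomial.C a) by
      rw [Multiset.map_map]; rfl] at h1
    rw [show (Finset.univ.val.map fun k => X - Polynomial.C (μ k))
        = (Finset.univ.val.map μ).map (fun a => X - Polynomial.C a) by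
      rw [Multiset.map_map]; rfl] at h1
    rwa [Polynomial.roots_multiset_prod_X_sub_C, Polynomial.roots_multiset_prod_X_sub_C] at h1
  rw [Fin.univ_val_map, Fin.univ_val_map] at hroots
  have hperm : List.Perm (List.ofFn lam) (List.ofFn μ) := Multiset.coe_eq_coe.mp hroots
  have hs1 : (List.ofFn lam).Pairwise (· ≥ ·) :=
    List.pairwise_ofFn.mpr fun i j hij => hlam hij.le
  have hs2 : (List.ofFn μ).Pairwise (· ≥ ·) :=
    List.pairwise_ofFn.mpr fun i j hij => hμ hij.le
  exact List.ofFn_inj.mp (List.Perm.eq_of_pairwise (fun a b _ _ h1 h2 => le_antisymm h2 h1) hs1 hs2 hperm)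

/-- The eigenvalues of `𝓑𝓑ᵀ` are invariant under `μ ↦ 1 − μ`: the characteristic
polynomial `p` of `𝓑𝓑ᵀ` satisfies `p(1 − X) = p(X)`; in particular the decreasingly
ordered squared singular values of `𝓑` satisfy `λ_k² + λ_{2n+1−k}² = 1`. -/
theorem stmt3 (N n : ℕ) (Aadj : Matrix (Fin N) (Fin n) ℂ) (hiso : Aadjᴴ * Aadj = 1)
    (x0 : Fin n → ℂ) (hy0 : ∀ j, Aadj.mulVec x0 j ≠ 0)
    (ω0 : Fin N → ℂ) (hω0 : ∀ j, ω0 j = phase (Aadj.mulVec x0 j)) :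
    ((calB Aadj ω0 * (calB Aadj ω0)ᵀ).charpoly.comp (1 - Polynomial.X)
        = (calB Aadj ω0 * (calB Aadj ω0)ᵀ).charpoly) ∧
    ∀ lam : Fin (2 * n) → ℝ, Antitone lam →
      (calB Aadj ω0 * (calB Aadj ω0)ᵀ).charpoly
          = ∏ k : Fin (2 * n), (Polynomial.X - Polynomial.C (lam k)) →
      ∀ k : Fin (2 * n), lam k + lam k.rev = 1 := by
  set B := Bmat Aadj ω0 with hBdef
  -- B * Bᴴ = 1
  have hBB : B * Bᴴ = 1 := by
    have hω : ∀ j, ω0 j * star (ω0 j) = 1 := by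
      intro j
      rw [hω0 j]
      have hz := hy0 j
      set z := Aadj.mulVec x0 j with hzdef
      have habs : ‖phase z‖ = 1 := by
        unfold phase
        rw [norm_div, Complex.norm_real, norm_norm,
          div_self (norm_ne_zero_iff.mpr hz)]
      rw [show star (phase z) = starRingEnd ℂ (phase z) from rfl, Complex.mul_conj,
        Complex.normSq_eq_norm_sq, habs]
      norm_num
    ext i i'
    rw [Matrix.mul_apply]
    have hterm : ∀ j, B i j * Bᴴ j i' = Aadjᴴ i j * Aadj j i' := by
      intro j
      rw [Matrix.conjTranspose_apply]
      show (Aadjᴴ i j * ω0 j) * star (Aadjᴴ i' j * ω0 j) = _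
      rw [star_mul']
      have h1 : star (Aadjᴴ i' j) = Aadj j i' := by
        rw [Matrix.conjTranspose_apply, star_star]
      calc (Aadjᴴ i j * ω0 j) * (star (Aadjᴴ i' j) * star (ω0 j))
          = (ω0 j * star (ω0 j)) * (Aadjᴴ i j * star (Aadjᴴ i' j)) := by ring
        _ = Aadjᴴ i j * Aadj j i' := by rw [hω j, one_mul, h1]
    rw [Finset.sum_congr rfl fun j _ => hterm j, ← Matrix.mul_apply, hiso]
  set R := B.map Complex.re with hRdef
  set I := B.map Complex.im with hIdef
  -- real / imaginary relations
  have key : ∀ i i', (B * Bᴴ) i i' =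
      Complex.mk ((R * Rᵀ + I * Iᵀ) i i') ((I * Rᵀ - R * Iᵀ) i i') := by
    intro i i'
    rw [Matrix.mul_apply]
    apply Complex.ext
    · simp only [Complex.re_sum, Matrix.add_apply, Matrix.mul_apply, ← Finset.sum_add_distrib]
      apply Finset.sum_congr rfl
      intro j _
      simp [hRdef, hIdef, Matrix.conjTranspose_apply, Complex.mul_re, Matrix.map_apply,
        Matrix.transpose_apply]
    · simp only [Complex.im_sum, Matrix.sub_apply, Matrix.mul_apply, ← Finset.sum_sub_distrib]
      apply Finset.sum_congr rfl
      intro j _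
      simp [hRdef, hIdef, Matrix.conjTranspose_apply, Complex.mul_im, Matrix.map_apply,
        Matrix.transpose_apply]
      ring
  have hRe : R * Rᵀ + I * Iᵀ = 1 := by
    ext i i'
    have h := key i i'
    rw [hBB] at h
    have h2 := congrArg Complex.re h
    simp only at h2
    rw [← h2]
    by_cases hii : i = i' <;> simp [Matrix.one_apply, hii]
  have hC : I * Rᵀ = R * Iᵀ := by
    ext i i'
    have h := key i i'
    rw [hBB] at h
    have h2 := congrArg Complex.im h
    simp only at h2
    have h0 : (I * Rᵀ - R * Iᵀ) i i' = 0 := by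
      rw [← h2]
      by_cases hii : i = i' <;> simp [Matrix.one_apply, hii]
    rw [Matrix.sub_apply] at h0
    linarith
  -- block form of 𝓑𝓑ᵀ
  have hM : calB Aadj ω0 * (calB Aadj ω0)ᵀ
      = fromBlocks (R * Rᵀ) (R * Iᵀ) (I * Rᵀ) (I * Iᵀ) := by
    rw [calB, Matrix.transpose_fromRows, Matrix.fromRows_mul_fromCols]
  set J : Matrix (Fin n ⊕ Fin n) (Fin n ⊕ Fin n) ℝ := fromBlocks 0 1 (-1) 0 with hJdef
  have hJarg : J * Jᵀ = 1 := by
    rw [hJdef, Matrix.fromBlocks_transpose, Matrix.fromBlocks_multiply]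
    simp [Matrix.fromBlocks_one]
  have hT : I * Iᵀ = 1 - R * Rᵀ := by
    rw [← hRe]; abel
  have hconj : J * (calB Aadj ω0 * (calB Aadj ω0)ᵀ) * Jᵀ
      = 1 - calB Aadj ω0 * (calB Aadj ω0)ᵀ := by
    rw [hM, hC, hT, hJdef, Matrix.fromBlocks_transpose, Matrix.fromBlocks_multiply,
      Matrix.fromBlocks_multiply, ← Matrix.fromBlocks_one, fromBlocks_sub']
    simp
  have hcard : Even (Fintype.card (Fin n ⊕ Fin n)) := by
    simp only [Fintype.card_sum, Fintype.card_fin]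
    exact ⟨n, rfl⟩
  have hpart1 : (calB Aadj ω0 * (calB Aadj ω0)ᵀ).charpoly.comp (1 - Polynomial.X)
      = (calB Aadj ω0 * (calB Aadj ω0)ᵀ).charpoly := by
    rw [charpoly_comp_one_sub _ hcard, ← hconj, charpoly_orth_conj J _ hJarg]
  refine ⟨hpart1, ?_⟩
  intro lam hlam hfact
  have hμ : Antitone (fun k : Fin (2 * n) => 1 - lam k.rev) := by
    intro a b hab
    simp only
    have : lam a.rev ≤ lam b.rev := hlam (Fin.rev_le_rev.mpr hab)
    linarith
  have hcomp : (∏ k : Fin (2 * n), (X - Polynomial.C (lam k))).comp (1 - X)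
      = ∏ k : Fin (2 * n), (X - Polynomial.C (1 - lam k)) := by
    have he : ∀ k : Fin (2 * n), compRingHom (1 - X) (X - Polynomial.C (lam k))
        = -(X - Polynomial.C (1 - lam k)) := by
      intro k
      simp only [coe_compRingHom_apply, sub_comp, X_comp, C_comp, _root_.map_sub,
        Polynomial.C_1]
      ring
    calc (∏ k : Fin (2 * n), (X - Polynomial.C (lam k))).comp (1 - X)
        = compRingHom (1 - X) (∏ k : Fin (2 * n), (X - Polynomial.C (lam k))) := rfl
      _ = ∏ k : Fin (2 * n), compRingHom (1 - X) (X - Polynomial.C (lam k)) := map_prod (compRingHom (1 - X : ℝ[X])) _ _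
      _ = ∏ k : Fin (2 * n), -(X - Polynomial.C (1 - lam k)) :=
          Finset.prod_congr rfl fun k _ => he k
      _ = ∏ k : Fin (2 * n), (-1 : ℝ[X]) * (X - Polynomial.C (1 - lam k)) :=
          Finset.prod_congr rfl fun k _ => by ring
      _ = ∏ k : Fin (2 * n), (X - Polynomial.C (1 - lam k)) := by
          rw [Finset.prod_mul_distrib, Finset.prod_const, Finset.card_univ, Fintype.card_fin,
            (even_two_mul n).neg_one_pow, one_mul]
  have hrev : ∏ k : Fin (2 * n), (X - Polynomial.C (1 - lam k.rev))
      = ∏ k : Fin (2 * n), (X - Polynomial.C (1 - lam k)) :=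
    Fintype.prod_equiv Fin.revPerm _ _ fun k => rfl
  have hprodeq : ∏ k : Fin (2 * n), (X - Polynomial.C (lam k))
      = ∏ k : Fin (2 * n), (X - Polynomial.C (1 - lam k.rev)) := by
    calc ∏ k : Fin (2 * n), (X - Polynomial.C (lam k))
        = (calB Aadj ω0 * (calB Aadj ω0)ᵀ).charpoly := hfact.symm
      _ = (calB Aadj ω0 * (calB Aadj ω0)ᵀ).charpoly.comp (1 - Polynomial.X) := hpart1.symm
      _ = (∏ k : Fin (2 * n), (X - Polynomial.C (lam k))).comp (1 - X) := by rw [hfact]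
      _ = ∏ k : Fin (2 * n), (X - Polynomial.C (1 - lam k)) := hcomp
      _ = ∏ k : Fin (2 * n), (X - Polynomial.C (1 - lam k.rev)) := hrev.symm
  have hfin := antitone_rev_eq lam (fun k => 1 - lam k.rev) hlam hμ hprodeq
  intro k
  have := congrFun hfin k
  linarith
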